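/- Let B₁ and B₂ be Banach algebras, each having a bounded approximate left identity, and let X be a Banach space. If ρ₁, σ₁ : B₁ → B(X) and ρ₂, σ₂ : B₂ → B(X) are commuting pairs of bounded representations such that the induced representations of the projective tensor product agree, i.e., ρ₁(b₁)ρ₂(b₂) = σ₁(b₁)σ₂(b₂) for all b₁ ∈ B₁, b₂ ∈ B₂, and this common representation is non-degenerate, then ρ₁ = σ₁ and ρ₂ = σ₂. -/
import Mathlib


open Filter

/-- Let `B₁, B₂` be Banach algebras, each with a bounded approximate left identity.
If `ρ₁, σ₁ : B₁ → B(X)` and `ρ₂, σ₂ : B₂ → B(X)` are commuting pairs of bounded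
representations with `ρ₁(b₁)ρ₂(b₂) = σ₁(b₁)σ₂(b₂)` for all `b₁, b₂`, and this common
representation of the tensor product is non-degenerate, then `ρ₁ = σ₁` and `ρ₂ = σ₂`. -/
theorem stmt5 {B₁ B₂ X : Type*} [NormedRing B₁] [NormedRing B₂]
    [NormedAlgebra ℂ B₁] [NormedAlgebra ℂ B₂]
    [CompleteSpace B₁] [CompleteSpace B₂]
    [NormedAddCommGroup X] [NormedSpace ℂ X] [CompleteSpace X]
    {ι₁ ι₂ : Type*} [Nonempty ι₁] [SemilatticeSup ι₁] [Nonempty ι₂] [SemilatticeSup ι₂]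
    (u : ι₁ → B₁) (M₁ : ℝ) (hu : ∀ i, ‖u i‖ ≤ M₁)
    (huapprox : ∀ b : B₁, Tendsto (fun i => u i * b) atTop (nhds b))
    (v : ι₂ → B₂) (M₂ : ℝ) (hv : ∀ i, ‖v i‖ ≤ M₂)
    (hvapprox : ∀ b : B₂, Tendsto (fun i => v i * b) atTop (nhds b))
    (ρ₁ σ₁ : B₁ →L[ℂ] X →L[ℂ] X) (ρ₂ σ₂ : B₂ →L[ℂ] X →L[ℂ] X)
    (hρ₁ : ∀ a b, ρ₁ (a * b) = ρ₁ a * ρ₁ b) (hσ₁ : ∀ a b, σ₁ (a * b) = σ₁ a * σ₁ b)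
    (hρ₂ : ∀ a b, ρ₂ (a * b) = ρ₂ a * ρ₂ b) (hσ₂ : ∀ a b, σ₂ (a * b) = σ₂ a * σ₂ b)
    (hρcomm : ∀ b₁ b₂, ρ₁ b₁ * ρ₂ b₂ = ρ₂ b₂ * ρ₁ b₁)
    (hσcomm : ∀ b₁ b₂, σ₁ b₁ * σ₂ b₂ = σ₂ b₂ * σ₁ b₁)
    (hagree : ∀ b₁ b₂, ρ₁ b₁ * ρ₂ b₂ = σ₁ b₁ * σ₂ b₂)
    (hnd : Dense (↑(Submodule.span ℂ
      {y : X | ∃ b₁ b₂ x, y = ρ₁ b₁ (ρ₂ b₂ x)}) : Set X)) :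
    ρ₁ = σ₁ ∧ ρ₂ = σ₂ := by

  have main : ∀ (f g : X →L[ℂ] X),
      (∀ b₁ b₂ (x : X), f (ρ₁ b₁ (ρ₂ b₂ x)) = g (ρ₁ b₁ (ρ₂ b₂ x))) → f = g := by
    intro f g h
    have key : ∀ y ∈ Submodule.span ℂ {y : X | ∃ b₁ b₂ x, y = ρ₁ b₁ (ρ₂ b₂ x)},
        f y = g y := by
      intro y hy
      induction hy using Submodule.span_induction with
      | mem y hy =>
        obtain ⟨b₁, b₂, x, rfl⟩ := hy
        exact h b₁ b₂ x
      | zero => simp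
      | add y z _ _ hy hz => simp [hy, hz]
      | smul c y _ hy => simp [hy]
    exact ContinuousLinearMap.coeFn_injective
      (Continuous.ext_on hnd f.continuous g.continuous (fun y hy => key y hy))
  constructor
  · ext a x
    refine ContinuousLinearMap.ext_iff.mp (main (ρ₁ a) (σ₁ a) ?_) x
    intro b₁ b₂ x
    have hop : ρ₁ a * (ρ₁ b₁ * ρ₂ b₂) = σ₁ a * (ρ₁ b₁ * ρ₂ b₂) := by
      rw [← mul_assoc, ← hρ₁, hagree, hσ₁, mul_assoc, hagree]
    exact ContinuousLinearMap.ext_iff.mp hop x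
  · ext a x
    refine ContinuousLinearMap.ext_iff.mp (main (ρ₂ a) (σ₂ a) ?_) x
    intro b₁ b₂ x
    have hop : ρ₂ a * (ρ₁ b₁ * ρ₂ b₂) = σ₂ a * (ρ₁ b₁ * ρ₂ b₂) := by
      rw [← mul_assoc, ← hρcomm, mul_assoc, ← hρ₂, hagree, hσ₂, ← mul_assoc, hσcomm,
        mul_assoc, hagree]
    exact ContinuousLinearMap.ext_iff.mp hop x
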